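/- There exists a complex separable Hilbert evolution algebra 𝒜 with a natural orthonormal basis 𝓑 = {e_i}_{i∈ℕ} such that the associated digraph G(𝒜,𝓑) contains no oriented cycles and yet 𝒜 is not nil (there is v ∈ 𝒜 with v^n ≠ 0 for all n ∈ ℕ). Hence, for infinite-dimensional Hilbert evolution algebras, the absence of oriented cycles in the associated digraph does not imply that the algebra is nil. -/

import Mathlib

noncomputable section

open scoped ENat

/-! ### Digraph notions associated to a matrix of structural constants

The associated digraph `G(𝒜,𝓑)` has vertex set `ℕ` and a directed edge `(i,k)` iff
`ω i k ≠ 0`. -/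

/-- `DsetU ω m U` is the set `D^m(U)` of `m`-th generation descendants of `U`:
`D^0(U) = U` and `D^{m+1}(U) = {k | ∃ i ∈ D^m(U), ω i k ≠ 0}`. -/
def DsetU (ω : ℕ → ℕ → ℂ) : ℕ → Set ℕ → Set ℕ
  | 0, U => U
  | m + 1, U => {k | ∃ i ∈ DsetU ω m U, ω i k ≠ 0}

/-- `Dm ω m i = D^m(i)`, the `m`-th generation descendants of the vertex `i`. -/
def Dm (ω : ℕ → ℕ → ℂ) (m i : ℕ) : Set ℕ := DsetU ω m {i}

/-- `Desc ω i = D(i) = ⋃_{m ≥ 1} D^m(i)`, the set of descendants of `i`. -/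
def Desc (ω : ℕ → ℕ → ℂ) (i : ℕ) : Set ℕ := ⋃ m ∈ {m : ℕ | 1 ≤ m}, Dm ω m i

/-- `gdist ω i u` is the length of a shortest directed path (walk) from `i` to `u`. -/
def gdist (ω : ℕ → ℕ → ℂ) (i u : ℕ) : ℕ := sInf {n : ℕ | u ∈ Dm ω n i}

/-- The depth `δ(G_i) = sup {dist(i,u) : u ∈ D(i)}` of the subgraph `G_i` induced on the
descendants of `i`, as an extended natural number (`⊤` when unbounded). -/
def depth (ω : ℕ → ℕ → ℂ) (i : ℕ) : ℕ∞ := ⨆ u ∈ Desc ω i, (gdist ω i u : ℕ∞)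

/-- `p 0, p 1, …, p n` is an oriented cycle: a non-empty directed path in which the only
repeated vertices are the first and the last one. -/
def IsOrientedCycle (ω : ℕ → ℕ → ℂ) (n : ℕ) (p : ℕ → ℕ) : Prop :=
  0 < n ∧ (∀ m < n, ω (p m) (p (m + 1)) ≠ 0) ∧ p n = p 0 ∧
    ∀ a b, a < b → b < n → p a ≠ p b

/-- The digraph associated to `ω` contains an oriented cycle. -/
def HasOrientedCycle (ω : ℕ → ℕ → ℂ) : Prop := ∃ n p, IsOrientedCycle ω n p

/-! ### Algebra notions -/

variable {H : Type*} [NormedAddCommGroup H] [InnerProductSpace ℂ H] [CompleteSpace H]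

/-- The structural constants of a Hilbert evolution algebra with product `mul` relative to
the natural orthonormal basis `e`: `ω i k` is the `k`-th coordinate of `e i · e i`,
so that `e i · e i = ∑'_k ω i k • e k`. -/
def structConst (mul : H →ₗ[ℂ] H →ₗ[ℂ] H) (e : HilbertBasis ℕ ℂ H) (i k : ℕ) : ℂ :=
  e.repr (mul (e i) (e i)) k

/-- Principal powers: `ppow mul v n = v^n` for `n ≥ 1` (with the junk value `v` at `n = 0`):
`v^1 = v` and `v^{n+1} = v^n · v`. -/
def ppow (mul : H →ₗ[ℂ] H →ₗ[ℂ] H) (v : H) : ℕ → H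
  | 0 => v
  | 1 => v
  | n + 2 => mul (ppow mul v (n + 1)) v

/-- The algebra is nil: every element has a vanishing principal power. -/
def IsNil (mul : H →ₗ[ℂ] H →ₗ[ℂ] H) : Prop := ∀ v : H, ∃ n : ℕ, 1 ≤ n ∧ ppow mul v n = 0

/-- The product `S·T` of two subspaces: the span of all products `x·y`, `x ∈ S`, `y ∈ T`. -/
def mulSub (mul : H →ₗ[ℂ] H →ₗ[ℂ] H) (S T : Submodule ℂ H) : Submodule ℂ H :=
  Submodule.span ℂ {z : H | ∃ x ∈ S, ∃ y ∈ T, z = mul x y}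

/-- The powers `𝒜^n` (for `n ≥ 1`, with the junk value `⊤` at `n = 0`):
`𝒜^1 = 𝒜` and `𝒜^{n+1} = ∑_{i=1}^{n} 𝒜^i 𝒜^{n+1-i}`. -/
def apow (mul : H →ₗ[ℂ] H →ₗ[ℂ] H) (n : ℕ) : Submodule ℂ H :=
  n.strongRecOn fun n ih =>
    match n, ih with
    | 0, _ => ⊤
    | 1, _ => ⊤
    | m + 2, ih =>
      ⨆ (i : ℕ) (h1 : 1 ≤ i) (h2 : i ≤ m + 1),
        mulSub mul (ih i (by omega)) (ih (m + 2 - i) (by omega))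

/-- The algebra is nilpotent: `𝒜^n = 0` for some `n`. -/
def IsNilpotent' (mul : H →ₗ[ℂ] H →ₗ[ℂ] H) : Prop := ∃ n : ℕ, 1 ≤ n ∧ apow mul n = ⊥

/-- The right powers `𝒜^{<n>}` (for `n ≥ 1`, with the junk value `⊤` at `n = 0`):
`𝒜^{<1>} = 𝒜` and `𝒜^{<n+1>} = 𝒜^{<n>}𝒜`. -/
def rapow (mul : H →ₗ[ℂ] H →ₗ[ℂ] H) : ℕ → Submodule ℂ H
  | 0 => ⊤
  | 1 => ⊤
  | n + 2 => mulSub mul (rapow mul (n + 1)) ⊤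

/-- The algebra is right nilpotent: `𝒜^{<n>} = 0` for some `n`. -/
def IsRightNilpotent (mul : H →ₗ[ℂ] H →ₗ[ℂ] H) : Prop := ∃ n : ℕ, 1 ≤ n ∧ rapow mul n = ⊥

/-- The index of right nilpotency `n_r(𝒜) = min {n : 𝒜^{<n>} = 0}`. -/
def rNilIndex (mul : H →ₗ[ℂ] H →ₗ[ℂ] H) : ℕ := sInf {n : ℕ | 1 ≤ n ∧ rapow mul n = ⊥}

/-- Powers of a subset `I ⊆ 𝒜` (for `n ≥ 1`, with the junk value `I` at `n = 0`):
`I^{<1>} = I` and `I^{<n+1>}` is the set of finite sums `∑_j x_j · y_j` with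
`x_j ∈ I^{<n>}` and `y_j ∈ I`. -/
def setPow (mul : H →ₗ[ℂ] H →ₗ[ℂ] H) (I : Set H) : ℕ → Set H
  | 0 => I
  | 1 => I
  | n + 2 => {v : H | ∃ (m : ℕ) (x y : Fin m → H),
      (∀ j, x j ∈ setPow mul I (n + 1)) ∧ (∀ j, y j ∈ I) ∧
        v = ∑ j, mul (x j) (y j)}

end

/-- A (complex, separable) Hilbert evolution algebra: a complex Hilbert space endowed with
a commutative bilinear product whose left multiplications are continuous, admitting a
natural orthonormal basis `{e i}_{i ∈ ℕ}` (a Hilbert basis with `e i · e j = 0` for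
`i ≠ j`); separability follows since the Hilbert basis is indexed by `ℕ`. -/
structure HilbertEvolutionAlgebra where
  /-- the underlying space -/
  H : Type
  [normed : NormedAddCommGroup H]
  [ips : InnerProductSpace ℂ H]
  [complete : CompleteSpace H]
  /-- the bilinear product -/
  mul : H →ₗ[ℂ] H →ₗ[ℂ] H
  comm : ∀ x y : H, mul x y = mul y x
  cont : ∀ x : H, Continuous fun y => mul x y
  /-- the natural orthonormal basis -/
  basis : HilbertBasis ℕ ℂ H
  natural : ∀ i j : ℕ, i ≠ j → mul (basis i) (basis j) = 0

attribute [instance] HilbertEvolutionAlgebra.normed HilbertEvolutionAlgebra.ips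
  HilbertEvolutionAlgebra.complete

noncomputable section Aux19

namespace Stmt19

abbrev H2 : Type := lp (fun _ : ℕ => ℂ) 2

/-- pointwise product shifted by one -/
def mf (x y : ℕ → ℂ) : ℕ → ℂ
  | 0 => 0
  | k + 1 => x k * y k

lemma toReal_two : (2 : ENNReal).toReal = 2 := by simp

lemma sq_summable (y : H2) : Summable fun n => ‖(y : ∀ _ : ℕ, ℂ) n‖ ^ 2 := by
  have h := (lp.memℓp y).summable (by rw [toReal_two]; norm_num)
  simpa [toReal_two, Real.rpow_two] using h

lemma prod_sq_summable (x y : H2) :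
    Summable fun n => ‖(x : ∀ _ : ℕ, ℂ) n * (y : ∀ _ : ℕ, ℂ) n‖ ^ 2 := by
  refine Summable.of_nonneg_of_le (fun n => by positivity) (fun n => ?_)
    ((sq_summable y).mul_left (‖x‖ ^ 2))
  simp only [norm_mul, mul_pow]
  gcongr
  exact lp.norm_apply_le_norm (by norm_num) x n

lemma mf_summable (x y : H2) :
    Summable fun k => ‖mf (x : ∀ _ : ℕ, ℂ) (y : ∀ _ : ℕ, ℂ) k‖ ^ 2 := by
  rw [← summable_nat_add_iff 1]
  exact (prod_sq_summable x y).congr fun n => rfl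

lemma mf_mem (x y : H2) : Memℓp (mf (x : ∀ _ : ℕ, ℂ) (y : ∀ _ : ℕ, ℂ)) 2 := by
  apply memℓp_gen
  simpa [toReal_two, Real.rpow_two] using mf_summable x y

def mulMap : H2 →ₗ[ℂ] H2 →ₗ[ℂ] H2 :=
  LinearMap.mk₂ ℂ (fun x y => (⟨mf x y, mf_mem x y⟩ : H2))
    (fun x x' y => lp.ext (funext fun k => by
      change mf _ _ k = mf _ _ k + mf _ _ k
      rcases k with _ | k <;> simp [mf, lp.coeFn_add, add_mul, Pi.add_apply]))
    (fun c x y => lp.ext (funext fun k => by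
      rcases k with _ | k <;> simp [mf, lp.coeFn_smul, mul_assoc]))
    (fun x y y' => lp.ext (funext fun k => by
      change mf _ _ k = mf _ _ k + mf _ _ k
      rcases k with _ | k <;> simp [mf, lp.coeFn_add, mul_add, Pi.add_apply]))
    (fun c x y => lp.ext (funext fun k => by
      rcases k with _ | k <;> simp [mf, lp.coeFn_smul] <;> ring))

@[simp] lemma mulMap_apply (x y : H2) (k : ℕ) :
    (mulMap x y : ∀ _ : ℕ, ℂ) k = mf (x : ∀ _ : ℕ, ℂ) (y : ∀ _ : ℕ, ℂ) k := rfl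

lemma mulMap_norm_le (x y : H2) : ‖mulMap x y‖ ≤ ‖x‖ * ‖y‖ := by
  apply lp.norm_le_of_tsum_le (by rw [toReal_two]; norm_num)
    (mul_nonneg (norm_nonneg _) (norm_nonneg _))
  simp only [toReal_two, Real.rpow_two, mulMap_apply]
  have h1 : ∑' k, ‖mf (x : ∀ _ : ℕ, ℂ) (y : ∀ _ : ℕ, ℂ) k‖ ^ 2
      = ∑' n, ‖(x : ∀ _ : ℕ, ℂ) n * (y : ∀ _ : ℕ, ℂ) n‖ ^ 2 := by
    rw [Summable.tsum_eq_zero_add (mf_summable x y)]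
    simp [mf]
  rw [h1]
  have h2 : ∑' n, ‖(x : ∀ _ : ℕ, ℂ) n * (y : ∀ _ : ℕ, ℂ) n‖ ^ 2
      ≤ ∑' n, ‖x‖ ^ 2 * ‖(y : ∀ _ : ℕ, ℂ) n‖ ^ 2 := by
    apply Summable.tsum_le_tsum _ _ ((sq_summable y).mul_left _)
    · intro n
      simp only [norm_mul, mul_pow]
      gcongr
      exact lp.norm_apply_le_norm (by norm_num) x n
    · have := mf_summable x y
      rw [← summable_nat_add_iff 1] at this
      simpa [mf] using this
  refine h2.trans ?_
  rw [tsum_mul_left]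
  have h3 : ∑' n, ‖(y : ∀ _ : ℕ, ℂ) n‖ ^ 2 = ‖y‖ ^ 2 := by
    have := lp.norm_rpow_eq_tsum (p := 2) (by rw [toReal_two]; norm_num) y
    simpa [toReal_two, Real.rpow_two] using this.symm
  rw [h3, mul_pow]

def bas : HilbertBasis ℕ ℂ H2 := HilbertBasis.ofRepr (LinearIsometryEquiv.refl ℂ H2)

lemma bas_apply (i : ℕ) : bas i = lp.single 2 i (1 : ℂ) := HilbertBasis.repr_self bas i

lemma bas_repr (z : H2) : bas.repr z = z := rfl

def v : H2 := ⟨fun n => (1 / 2 : ℂ) ^ n, by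
  apply memℓp_gen
  have : Summable fun n : ℕ => ((1 / 4 : ℝ)) ^ n :=
    summable_geometric_of_lt_one (by norm_num) (by norm_num)
  refine this.congr fun n => ?_
  rw [toReal_two, Real.rpow_two]
  have hn : ‖(1 / 2 : ℂ)‖ = (1 / 2 : ℝ) := by norm_num
  simp only [norm_pow, hn]
  rw [show (1 / 4 : ℝ) = (1 / 2) ^ 2 by norm_num, ← pow_mul, ← pow_mul, mul_comm]⟩

@[simp] lemma v_apply (n : ℕ) : (v : ∀ _ : ℕ, ℂ) n = (1 / 2 : ℂ) ^ n := rfl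

lemma mulMap_comm (x y : H2) : mulMap x y = mulMap y x := by
  refine lp.ext (funext fun k => ?_)
  rcases k with _ | k
  · rfl
  · show mf (x : ∀ _ : ℕ, ℂ) (y : ∀ _ : ℕ, ℂ) (k + 1)
        = mf (y : ∀ _ : ℕ, ℂ) (x : ∀ _ : ℕ, ℂ) (k + 1)
    simp [mf, mul_comm]

lemma mulMap_natural (i j : ℕ) (hij : i ≠ j) : mulMap (bas i) (bas j) = 0 := by
  refine lp.ext (funext fun k => ?_)
  rcases k with _ | k
  · show mf (bas i : ∀ _ : ℕ, ℂ) (bas j : ∀ _ : ℕ, ℂ) 0 = ((0 : H2) : ∀ _ : ℕ, ℂ) 0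
    simp [mf, lp.coeFn_zero]
  · show mf (bas i : ∀ _ : ℕ, ℂ) (bas j : ∀ _ : ℕ, ℂ) (k + 1) = ((0 : H2) : ∀ _ : ℕ, ℂ) (k + 1)
    simp only [mf, bas_apply, lp.coeFn_zero, Pi.zero_apply]
    rcases eq_or_ne k i with rfl | h
    · rw [lp.single_apply_ne 2 j _ hij, mul_zero]
    · rw [lp.single_apply_ne 2 i _ h, zero_mul]

/-- The example algebra. -/
def A19 : HilbertEvolutionAlgebra where
  H := H2
  normed := inferInstance
  ips := inferInstance
  complete := inferInstance
  mul := mulMap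
  comm := mulMap_comm
  cont := fun x => AddMonoidHomClass.continuous_of_bound (mulMap x) ‖x‖ (fun y => mulMap_norm_le x y)
  basis := bas
  natural := mulMap_natural

lemma struct_eq (i k : ℕ) : structConst mulMap bas i k
    = mf (bas i : ∀ _ : ℕ, ℂ) (bas i : ∀ _ : ℕ, ℂ) k := rfl

lemma struct_ne_zero {i k : ℕ} (h : structConst mulMap bas i k ≠ 0) :
    k = i + 1 := by
  rw [struct_eq] at h
  rcases k with _ | k
  · exact absurd rfl h
  · simp only [mf, bas_apply] at h
    rcases eq_or_ne k i with rfl | hne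
    · rfl
    · rw [lp.single_apply_ne 2 i _ hne, zero_mul] at h
      exact absurd rfl h

lemma no_cycle : ¬ HasOrientedCycle (structConst mulMap bas) := by
  rintro ⟨n, p, hn, hedge, hclose, -⟩
  have key : ∀ m, m ≤ n → p m = p 0 + m := by
    intro m hm
    induction m with
    | zero => rfl
    | succ m ih =>
      have h1 : p (m + 1) = p m + 1 := (struct_ne_zero (hedge m (by omega))).symm ▸ rfl
      rw [h1, ih (by omega)]
      ring
  have := key n le_rfl
  rw [hclose] at this
  omega

def coord (z : H2) (n : ℕ) : ℂ := z n

lemma coord_zero (n : ℕ) : coord 0 n = 0 := rfl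

lemma ppow_coord : ∀ n : ℕ, coord (ppow mulMap v (n + 1)) n ≠ 0 := by
  intro n
  induction n with
  | zero =>
    show coord v 0 ≠ 0
    simp [coord, v]
  | succ n ih =>
    have hr : coord (ppow mulMap v (n + 1 + 1)) (n + 1)
        = coord (ppow mulMap v (n + 1)) n * coord v n := rfl
    rw [hr]
    refine mul_ne_zero ih ?_
    show (1 / 2 : ℂ) ^ n ≠ 0
    exact pow_ne_zero _ (by norm_num)

lemma not_nil : ∀ n : ℕ, 1 ≤ n → ppow mulMap v n ≠ 0 := by
  intro n hn h0
  obtain ⟨m, rfl⟩ : ∃ m, n = m + 1 := ⟨n - 1, by omega⟩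
  apply ppow_coord m
  rw [h0]
  exact coord_zero m

end Stmt19

end Aux19


/-- There exists a complex separable Hilbert evolution algebra `𝒜` whose
associated digraph `G(𝒜,𝓑)` has no oriented cycles and which nevertheless is not nil:
there is `v ∈ 𝒜` with `v^n ≠ 0` for all `n ≥ 1`. Hence for infinite-dimensional Hilbert
evolution algebras the absence of oriented cycles does not imply that the algebra is nil. -/
theorem stmt_19 :
    ∃ A : HilbertEvolutionAlgebra,
      ¬ HasOrientedCycle (structConst A.mul A.basis) ∧
      ∃ v : A.H, ∀ n : ℕ, 1 ≤ n → ppow A.mul v n ≠ 0 := by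
  exact ⟨Stmt19.A19, Stmt19.no_cycle, Stmt19.v, Stmt19.not_nil⟩
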